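/- For all m ≥ 5, the pebbling number of the Kneser graph K(m, 2) satisfies π(K(m, 2)) = C(m, 2); that is, every configuration of size C(m,2) is r-solvable for every vertex r, and for some vertex r there is a configuration of size C(m,2) − 1 that is not r-solvable. -/

import Mathlib

/-- A single pebbling step: remove two pebbles from `u` and add one to an adjacent `v`. -/
def PebblingStep {V : Type} [DecidableEq V] (G : SimpleGraph V) (C C' : V → ℕ) : Prop :=
  ∃ u v : V, G.Adj u v ∧ 2 ≤ C u ∧
    C' = fun w => if w = u then C u - 2 else if w = v then C v + 1 else C w

/-- `C` solves the target distribution `D`: some sequence of pebbling steps reaches a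
configuration with at least `D v` pebbles on each vertex `v`. -/
def Solvable {V : Type} [DecidableEq V] (G : SimpleGraph V) (C D : V → ℕ) : Prop :=
  ∃ C' : V → ℕ, Relation.ReflTransGen (PebblingStep G) C C' ∧ ∀ v, D v ≤ C' v

/-- The distribution with `t` pebbles stacked on `r` and none elsewhere. -/
def stack {V : Type} [DecidableEq V] (r : V) (t : ℕ) : V → ℕ :=
  fun v => if v = r then t else 0

/-- The pebbling number of the demand `D` in `G`: the smallest `m` such that every
configuration of size `m` is `D`-solvable. -/
noncomputable def pebblingNumber {V : Type} [Fintype V] [DecidableEq V] (G : SimpleGraph V) (D : V → ℕ) : ℕ :=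
  sInf {m | ∀ C : V → ℕ, (∑ v, C v) = m → Solvable G C D}

/-- The `t`-fold pebbling number of `G`. -/
noncomputable def tPebblingNumber {V : Type} [Fintype V] [DecidableEq V]
    (G : SimpleGraph V) (t : ℕ) : ℕ :=
  Finset.univ.sup fun r => pebblingNumber G (stack r t)

/-- Reaching `C'` from `C` by exactly `k` pebbling steps. -/
inductive StepsN {V : Type} [DecidableEq V] (G : SimpleGraph V) : ℕ → (V → ℕ) → (V → ℕ) → Prop
  | refl (C : V → ℕ) : StepsN G 0 C C
  | tail {k : ℕ} {C C' C'' : V → ℕ} :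
      StepsN G k C C' → PebblingStep G C' C'' → StepsN G (k + 1) C C''

/-- `C` has an `r`-solution of cost at most `c` (cost = number of pebbling steps plus one). -/
def CheaplySolvable {V : Type} [DecidableEq V] (G : SimpleGraph V) (C : V → ℕ) (r : V) (c : ℕ) : Prop :=
  ∃ (k : ℕ) (C' : V → ℕ), StepsN G k C C' ∧ 1 ≤ C' r ∧ k + 1 ≤ c

/-- The eccentricity of a vertex: the maximum distance to any other vertex. -/
noncomputable def eccentricity {V : Type} [Fintype V] (G : SimpleGraph V) (r : V) : ℕ :=
  Finset.univ.sup fun v => G.dist r v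

/-- A vertex is simplicial if its neighborhood induces a complete graph. -/
def IsSimplicial {V : Type} (G : SimpleGraph V) (v : V) : Prop :=
  ∀ a b : V, G.Adj v a → G.Adj v b → a ≠ b → G.Adj a b

/-- A 2-path is either `K₂` or `K₃`, or a graph with exactly two simplicial vertices
`u` and `v` such that the neighborhood of `v` induces `K₂` and `G - v` is a 2-path. -/
inductive IsTwoPath : {V : Type} → SimpleGraph V → Prop
  | complete2 {V : Type} (G : SimpleGraph V) :
      Nat.card V = 2 → (∀ a b : V, a ≠ b → G.Adj a b) → IsTwoPath G
  | complete3 {V : Type} (G : SimpleGraph V) :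
      Nat.card V = 3 → (∀ a b : V, a ≠ b → G.Adj a b) → IsTwoPath G
  | extend {V : Type} (G : SimpleGraph V) (u v : V) :
      u ≠ v →
      {w : V | IsSimplicial G w} = {u, v} →
      (G.neighborSet v).ncard = 2 →
      IsSimplicial G v →
      IsTwoPath (G.induce {w : V | w ≠ v}) →
      IsTwoPath G

/-- The Kneser graph `K(m, h)`: vertices are the `h`-element subsets of `{1, …, m}`,
adjacent iff disjoint. -/
def kneserGraph (m h : ℕ) : SimpleGraph {s : Finset (Fin m) // s.card = h} :=
  SimpleGraph.fromRel fun a b => Disjoint a.1 b.1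



section Rules

variable {V : Type} [DecidableEq V] {G : SimpleGraph V}

def mv (C : V → ℕ) (u v : V) : V → ℕ :=
  fun w => if w = u then C u - 2 else if w = v then C v + 1 else C w

lemma step_mv {C : V → ℕ} {u v : V} (h : G.Adj u v) (h2 : 2 ≤ C u) :
    PebblingStep G C (mv C u v) := ⟨u, v, h, h2, rfl⟩

lemma solvable_head {C C' D : V → ℕ} (h : PebblingStep G C C') (hs : Solvable G C' D) :
    Solvable G C D := by
  obtain ⟨E, hE, hD⟩ := hs
  exact ⟨E, Relation.ReflTransGen.head h hE, hD⟩

lemma solvable_of_one {C : V → ℕ} {r : V} (h : 1 ≤ C r) : Solvable G C (stack r 1) := by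
  refine ⟨C, Relation.ReflTransGen.refl, fun v => ?_⟩
  unfold stack
  split
  · next he => subst he; exact h
  · exact Nat.zero_le _

lemma rule1 {C : V → ℕ} {r w : V} (hwr : G.Adj w r) (h2 : 2 ≤ C w) :
    Solvable G C (stack r 1) := by
  refine solvable_head (step_mv hwr h2) (solvable_of_one ?_)
  have h1 : r ≠ w := hwr.ne'
  simp [mv, h1]

/-- 4 pebbles at distance two. -/
lemma rule2 {C : V → ℕ} {r u w : V} (huw : G.Adj u w) (hwr : G.Adj w r) (hru : r ≠ u)
    (h4 : 4 ≤ C u) : Solvable G C (stack r 1) := by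
  have huw' : u ≠ w := huw.ne
  have hrw : r ≠ w := hwr.ne'
  refine solvable_head (step_mv huw (by omega)) ?_
  refine solvable_head (step_mv huw (by simp [mv, huw'] <;> omega)) ?_
  refine solvable_head (G := G) (step_mv hwr (by simp [mv, huw', huw'.symm] <;> omega)) ?_
  exact solvable_of_one (by simp [mv, hru, hrw, huw'.symm])

/-- 2 pebbles on `u`, 1 on `w`, `u ~ w ~ r`. -/
lemma rule3 {C : V → ℕ} {r u w : V} (huw : G.Adj u w) (hwr : G.Adj w r) (hru : r ≠ u)
    (h2 : 2 ≤ C u) (h1 : 1 ≤ C w) : Solvable G C (stack r 1) := by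
  have huw' : u ≠ w := huw.ne
  have hrw : r ≠ w := hwr.ne'
  refine solvable_head (step_mv huw h2) ?_
  refine solvable_head (G := G) (step_mv hwr (by simp [mv, huw'.symm] <;> omega)) ?_
  exact solvable_of_one (by simp [mv, hru, hrw, huw'.symm])

/-- 2 pebbles on each of `u, v`, common neighbour `w` of `u, v, r`. -/
lemma rule4 {C : V → ℕ} {r u v w : V} (huw : G.Adj u w) (hvw : G.Adj v w) (hwr : G.Adj w r)
    (huv : u ≠ v) (hru : r ≠ u) (hrv : r ≠ v)
    (h2u : 2 ≤ C u) (h2v : 2 ≤ C v) : Solvable G C (stack r 1) := by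
  have huw' : u ≠ w := huw.ne
  have hvw' : v ≠ w := hvw.ne
  have hrw : r ≠ w := hwr.ne'
  refine solvable_head (step_mv huw h2u) ?_
  refine solvable_head (step_mv hvw (by simp [mv, huv.symm, hvw'] <;> omega)) ?_
  refine solvable_head (G := G) (step_mv hwr (by simp [mv, huw'.symm, hvw'.symm] <;> omega)) ?_
  exact solvable_of_one (by simp [mv, hru, hrv, hrw, huw'.symm, hvw'.symm])

/-- Chain: 2 on `u`, 1 on `v`, 1 on `w`, `u ~ v ~ w ~ r`. -/
lemma rule5 {C : V → ℕ} {r u v w : V} (huv : G.Adj u v) (hvw : G.Adj v w) (hwr : G.Adj w r)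
    (huw : u ≠ w) (hru : r ≠ u) (hrv : r ≠ v)
    (h2 : 2 ≤ C u) (h1v : 1 ≤ C v) (h1w : 1 ≤ C w) : Solvable G C (stack r 1) := by
  have huv' : u ≠ v := huv.ne
  have hvw' : v ≠ w := hvw.ne
  have hrw : r ≠ w := hwr.ne'
  refine solvable_head (step_mv huv h2) ?_
  refine solvable_head (step_mv hvw (by simp [mv, huv'.symm] <;> omega)) ?_
  refine solvable_head (G := G) (step_mv hwr (by simp [mv, huw.symm, hvw'.symm] <;> omega)) ?_
  exact solvable_of_one (by simp [mv, hru, hrv, hrw, huw.symm, hvw'.symm])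

/-- Donation to a 3-stack: 2 on `u`, 3 on `v`, `u ~ v ~ w ~ r`. -/
lemma rule7 {C : V → ℕ} {r u v w : V} (huv : G.Adj u v) (hvw : G.Adj v w) (hwr : G.Adj w r)
    (huw : u ≠ w) (hru : r ≠ u) (hrv : r ≠ v)
    (h2 : 2 ≤ C u) (h3 : 3 ≤ C v) : Solvable G C (stack r 1) := by
  have huv' : u ≠ v := huv.ne
  have hvw' : v ≠ w := hvw.ne
  have hrw : r ≠ w := hwr.ne'
  refine solvable_head (step_mv huv h2) ?_
  refine solvable_head (step_mv hvw (by simp [mv, huv'.symm] <;> omega)) ?_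
  refine solvable_head (step_mv hvw (by simp [mv, huv'.symm, hvw'] <;> omega)) ?_
  refine solvable_head (G := G) (step_mv hwr (by simp [mv, huw.symm, hvw'.symm] <;> omega)) ?_
  exact solvable_of_one (by simp [mv, hru, hrv, hrw, huw.symm, hvw'.symm])

/-- Two-donor chain: 2 on `u₁`, 1 on `v`, 2 on `u₂`, `u₁ ~ v ~ w`, `u₂ ~ w ~ r`. -/
lemma rule8 {C : V → ℕ} {r u₁ u₂ v w : V} (h1v : G.Adj u₁ v) (hvw : G.Adj v w)
    (h2w : G.Adj u₂ w) (hwr : G.Adj w r)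
    (h12 : u₁ ≠ u₂) (h2v : u₂ ≠ v) (h1w : u₁ ≠ w)
    (hru : r ≠ u₁) (hru2 : r ≠ u₂) (hrv : r ≠ v)
    (hc1 : 2 ≤ C u₁) (hcv : 1 ≤ C v) (hc2 : 2 ≤ C u₂) : Solvable G C (stack r 1) := by
  have h1v' : u₁ ≠ v := h1v.ne
  have hvw' : v ≠ w := hvw.ne
  have h2w' : u₂ ≠ w := h2w.ne
  have hrw : r ≠ w := hwr.ne'
  refine solvable_head (step_mv h1v hc1) ?_
  refine solvable_head (step_mv hvw (by simp [mv, h1v'.symm] <;> omega)) ?_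
  refine solvable_head (step_mv h2w (by simp [mv, h12.symm, h2v, h2w'] <;> omega)) ?_
  refine solvable_head (G := G) (step_mv hwr (by simp [mv, h1w.symm, hvw'.symm, h2w'.symm] <;> omega)) ?_
  exact solvable_of_one (by simp [mv, hru, hru2, hrv, hrw, h1w.symm, hvw'.symm, h2w'.symm])

/-- A configuration with at most one pebble everywhere and none on `r` is unsolvable. -/
lemma unsolvable_of_le_one {C : V → ℕ} {r : V} (h1 : ∀ v, C v ≤ 1) (h0 : C r = 0) :
    ¬ Solvable G C (stack r 1) := by
  rintro ⟨E, hE, hD⟩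
  rcases Relation.ReflTransGen.cases_head hE with he | ⟨b, ⟨u, v, _, h2, _⟩, _⟩
  · have h := hD r
    rw [← he] at h
    simp [stack] at h
    omega
  · exact absurd h2 (by have := h1 u; omega)

end Rules

section Equivariance

variable {V : Type} [DecidableEq V] {G : SimpleGraph V}

lemma step_comp (e : V ≃ V) (hadj : ∀ u v, G.Adj (e u) (e v) ↔ G.Adj u v)
    {C C' : V → ℕ} (h : PebblingStep G C C') : PebblingStep G (C ∘ e) (C' ∘ e) := by
  obtain ⟨u, v, ha, h2, hC⟩ := h
  refine ⟨e.symm u, e.symm v, ?_, ?_, ?_⟩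
  · rw [← hadj]; simpa using ha
  · simpa using h2
  · subst hC
    funext w
    simp only [Function.comp_apply, Equiv.apply_eq_iff_eq_symm_apply, e.apply_symm_apply]

lemma solvable_comp (e : V ≃ V) (hadj : ∀ u v, G.Adj (e u) (e v) ↔ G.Adj u v)
    {C D : V → ℕ} (h : Solvable G C D) : Solvable G (C ∘ e) (D ∘ e) := by
  obtain ⟨E, hE, hD⟩ := h
  refine ⟨E ∘ e, ?_, fun v => hD (e v)⟩
  exact Relation.ReflTransGen.lift (fun F => F ∘ e) (fun a b hab => step_comp e hadj hab) _ _ hE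

end Equivariance

section KneserBasic
variable {m : ℕ}

abbrev KV (m : ℕ) := {s : Finset (Fin m) // s.card = 2}

lemma kneser_adj (u v : KV m) : (kneserGraph m 2).Adj u v ↔ u ≠ v ∧ Disjoint u.1 v.1 := by
  constructor
  · rintro ⟨hne, h | h⟩
    · exact ⟨hne, h⟩
    · exact ⟨hne, h.symm⟩
  · rintro ⟨hne, h⟩
    exact ⟨hne, Or.inl h⟩

lemma adj_of_disjoint {u v : KV m} (h : Disjoint u.1 v.1) : (kneserGraph m 2).Adj u v := by
  rw [kneser_adj]
  refine ⟨fun he => ?_, h⟩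
  subst he
  rw [disjoint_self] at h
  have := u.2
  rw [h] at this
  simp at this

/-- The permutation-induced equivalence on vertices of a Kneser graph. -/
def vmap (σ : Fin m ≃ Fin m) : KV m ≃ KV m where
  toFun v := ⟨v.1.map σ.toEmbedding, by rw [Finset.card_map]; exact v.2⟩
  invFun v := ⟨v.1.map σ.symm.toEmbedding, by rw [Finset.card_map]; exact v.2⟩
  left_inv v := by
    ext x
    simp
  right_inv v := by
    ext x
    simp

lemma vmap_adj (σ : Fin m ≃ Fin m) (u v : KV m) :
    (kneserGraph m 2).Adj (vmap σ u) (vmap σ v) ↔ (kneserGraph m 2).Adj u v := by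
  rw [kneser_adj, kneser_adj]
  constructor
  · rintro ⟨hne, hd⟩
    refine ⟨fun he => hne (by rw [he]), ?_⟩
    rw [← Finset.disjoint_map σ.toEmbedding]
    exact hd
  · rintro ⟨hne, hd⟩
    refine ⟨fun he => hne ((vmap σ).injective he), ?_⟩
    exact (Finset.disjoint_map σ.toEmbedding).2 hd

/-- Transport solvability along a permutation of the ground set. -/
lemma solvable_of_vmap {σ : Fin m ≃ Fin m} {C : KV m → ℕ} {r : KV m}
    (h : Solvable (kneserGraph m 2) (C ∘ vmap σ) (stack r 1)) :
    Solvable (kneserGraph m 2) C (stack (vmap σ r) 1) := by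
  have h2 := solvable_comp (G := kneserGraph m 2) (vmap σ).symm
    (fun u v => by
      rw [← vmap_adj σ ((vmap σ).symm u) ((vmap σ).symm v)]
      simp) h
  have e1 : (C ∘ vmap σ) ∘ (vmap σ).symm = C := by
    funext w; simp
  have e2 : (stack r 1) ∘ (vmap σ).symm = stack (vmap σ r) 1 := by
    funext w
    simp only [Function.comp_apply, stack, Equiv.symm_apply_eq]
  rwa [e1, e2] at h2

/-- Existence of a vertex disjoint from a small set. -/
lemma exists_disjoint_vertex (t : Finset (Fin m)) (h : t.card + 2 ≤ m) :
    ∃ w : KV m, Disjoint w.1 t := by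
  have hc : 2 ≤ (Finset.univ \ t).card := by
    rw [Finset.card_sdiff_of_subset (Finset.subset_univ t), Finset.card_univ, Fintype.card_fin]
    omega
  obtain ⟨w, hw, hwc⟩ := Finset.exists_subset_card_eq hc
  exact ⟨⟨w, hwc⟩, Finset.disjoint_left.2 fun x hx hxt =>
    (Finset.mem_sdiff.1 (hw hx)).2 hxt⟩

lemma card_KV : Fintype.card (KV m) = m.choose 2 := by
  rw [Fintype.card_finset_len, Fintype.card_fin]

end KneserBasic

section Upper6
open Finset

lemma upper6 {m : ℕ} (hm : 6 ≤ m) (r : KV m) (C : KV m → ℕ)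
    (hsum : (∑ v, C v) = m.choose 2) : Solvable (kneserGraph m 2) C (stack r 1) := by
  classical
  by_contra hns
  set G := kneserGraph m 2 with hG
  -- basic facts
  have hr0 : C r = 0 := by
    by_contra h
    exact hns (solvable_of_one (by omega))
  have hA1 : ∀ w, G.Adj w r → C w ≤ 1 := by
    intro w hw
    by_contra h
    exact hns (rule1 hw (by omega))
  have hmeet : ∀ u : KV m, u ≠ r → ¬ G.Adj u r → (u.1 ∩ r.1).Nonempty := by
    intro u hne hna
    rw [Finset.nonempty_iff_ne_empty]
    intro he
    exact hna (adj_of_disjoint (Finset.disjoint_iff_inter_eq_empty.2 he))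
  have hcard3 : ∀ u : KV m, u ≠ r → ¬ G.Adj u r → (u.1 ∪ r.1).card ≤ 3 := by
    intro u hne hna
    have h1 := Finset.card_union_add_card_inter u.1 r.1
    have h2 : 1 ≤ (u.1 ∩ r.1).card := Finset.card_pos.2 (hmeet u hne hna)
    have := u.2; have := r.2
    omega
  have hcomm : ∀ u : KV m, u ≠ r → ¬ G.Adj u r →
      ∃ w : KV m, G.Adj u w ∧ G.Adj w r := by
    intro u hne hna
    obtain ⟨w, hw⟩ := exists_disjoint_vertex (u.1 ∪ r.1) (by have := hcard3 u hne hna; omega)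
    rw [Finset.disjoint_union_right] at hw
    exact ⟨w, adj_of_disjoint hw.1.symm, adj_of_disjoint hw.2⟩
  have hB3 : ∀ u : KV m, u ≠ r → ¬ G.Adj u r → C u ≤ 3 := by
    intro u hne hna
    by_contra h
    obtain ⟨w, huw, hwr⟩ := hcomm u hne hna
    exact hns (rule2 huw hwr hne.symm (by omega))
  -- partition
  set A : Finset (KV m) := univ.filter (fun v => G.Adj v r) with hA
  set B : Finset (KV m) := (univ.filter (fun v => ¬ G.Adj v r)).erase r with hBdef
  have hrmem : r ∈ univ.filter (fun v => ¬ G.Adj v r) := by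
    simp [G.irrefl]
  have hmemB : ∀ v, v ∈ B ↔ v ≠ r ∧ ¬ G.Adj v r := by
    intro v; simp [hBdef]
  have hcards : Fintype.card (KV m) = A.card + B.card + 1 := by
    have h0 : A.card + (univ.filter (fun v => ¬ G.Adj v r)).card = Fintype.card (KV m) := by
      rw [hA, Finset.card_filter_add_card_filter_not, Finset.card_univ]
    have h1 : B.card = (univ.filter (fun v => ¬ G.Adj v r)).card - 1 := by
      rw [hBdef, Finset.card_erase_of_mem hrmem]
    have h2 : 1 ≤ (univ.filter (fun v => ¬ G.Adj v r)).card := Finset.card_pos.2 ⟨r, hrmem⟩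
    omega
  have hsplit : (∑ v, C v) = (∑ v ∈ A, C v) + ((∑ v ∈ B, C v) + C r) := by
    rw [← Finset.sum_filter_add_sum_filter_not univ (fun v => G.Adj v r) C]
    congr 1
    rw [hBdef, Finset.sum_erase_add _ _ hrmem]
  have hAsum : (∑ v ∈ A, C v) ≤ A.card := by
    have h := Finset.sum_le_card_nsmul A C 1
      (fun v hv => hA1 v (by simp [hA] at hv; exact hv))
    simpa using h
  have hcardV : Fintype.card (KV m) = m.choose 2 := card_KV
  -- pigeonhole: some vertex of B has at least 2 pebbles
  obtain ⟨u, huB, hu2⟩ : ∃ u ∈ B, 2 ≤ C u := by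
    by_contra h
    push_neg at h
    have : (∑ v ∈ B, C v) ≤ B.card • 1 := Finset.sum_le_card_nsmul _ _ _
      (fun v hv => by have := h v hv; omega)
    simp at this
    omega
  obtain ⟨hur, huna⟩ := (hmemB u).1 huB
  by_cases hS : ∃ v ∈ B, v ≠ u ∧ 2 ≤ C v
  · -- two heavy vertices in B
    obtain ⟨v, hvB, hvu, hv2⟩ := hS
    obtain ⟨hvr, hvna⟩ := (hmemB v).1 hvB
    have hc4 : (u.1 ∪ (v.1 ∪ r.1)).card ≤ 4 := by
      have h1 := Finset.card_union_add_card_inter u.1 (v.1 ∪ r.1)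
      have h2 : 1 ≤ (u.1 ∩ (v.1 ∪ r.1)).card := by
        refine Finset.card_pos.2 ?_
        obtain ⟨x, hx⟩ := hmeet u hur huna
        rw [Finset.mem_inter] at hx
        exact ⟨x, Finset.mem_inter.2 ⟨hx.1, Finset.mem_union_right _ hx.2⟩⟩
      have h3 := hcard3 v hvr hvna
      have := u.2
      omega
    obtain ⟨w, hw⟩ := exists_disjoint_vertex _ (by omega : (u.1 ∪ (v.1 ∪ r.1)).card + 2 ≤ m)
    rw [Finset.disjoint_union_right, Finset.disjoint_union_right] at hw
    exact hns (rule4 (adj_of_disjoint hw.1.symm) (adj_of_disjoint hw.2.1.symm)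
      (adj_of_disjoint hw.2.2) hvu.symm hur.symm hvr.symm hu2 hv2)
  · -- u is the unique heavy vertex of B
    push_neg at hS
    have hBsum : (∑ v ∈ B, C v) ≤ B.card + 2 := by
      have h1 : (∑ v ∈ B.erase u, C v) ≤ (B.erase u).card • 1 :=
        Finset.sum_le_card_nsmul _ _ _ (fun v hv => by
          rw [Finset.mem_erase] at hv
          have := hS v hv.2 hv.1
          omega)
      have h2 : (∑ v ∈ B.erase u, C v) + C u = ∑ v ∈ B, C v :=
        Finset.sum_erase_add _ _ huB
      have h3 := Finset.card_erase_of_mem huB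
      have h4 := hB3 u hur huna
      have h5 : 1 ≤ B.card := Finset.card_pos.2 ⟨u, huB⟩
      simp only [smul_eq_mul, mul_one] at h1
      omega
    -- two empty common neighbours
    have hc3 : (u.1 ∪ r.1).card ≤ 3 := hcard3 u hur huna
    have hc : 3 ≤ (Finset.univ \ (u.1 ∪ r.1)).card := by
      rw [Finset.card_sdiff_of_subset (Finset.subset_univ _), Finset.card_univ, Fintype.card_fin]
      omega
    obtain ⟨s, hs, hsc⟩ := Finset.exists_subset_card_eq hc
    obtain ⟨x, y, z, hxy, hxz, hyz, hsxyz⟩ := Finset.card_eq_three.1 hsc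
    have hmem : ∀ a ∈ s, a ∉ u.1 ∧ a ∉ r.1 := by
      intro a ha
      have := hs ha
      rw [Finset.mem_sdiff, Finset.mem_union] at this
      exact ⟨fun h => this.2 (Or.inl h), fun h => this.2 (Or.inr h)⟩
    have hxs : x ∈ s := by rw [hsxyz]; simp
    have hys : y ∈ s := by rw [hsxyz]; simp
    have hzs : z ∈ s := by rw [hsxyz]; simp
    set w₁ : KV m := ⟨{x, y}, Finset.card_pair hxy⟩ with hw1
    set w₂ : KV m := ⟨{x, z}, Finset.card_pair hxz⟩ with hw2
    have hdisj : ∀ (a b : Fin m), a ∈ s → b ∈ s → a ≠ b →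
        Disjoint ({a, b} : Finset (Fin m)) u.1 ∧ Disjoint ({a, b} : Finset (Fin m)) r.1 := by
      intro a b ha hb hab
      have ha' := hmem a ha
      have hb' := hmem b hb
      refine ⟨Finset.disjoint_left.2 ?_, Finset.disjoint_left.2 ?_⟩
      · intro c hc
        rcases Finset.mem_insert.1 hc with h' | h'
        · rw [h']; exact ha'.1
        · rw [Finset.mem_singleton] at h'; rw [h']; exact hb'.1
      · intro c hc
        rcases Finset.mem_insert.1 hc with h' | h'
        · rw [h']; exact ha'.2
        · rw [Finset.mem_singleton] at h'; rw [h']; exact hb'.2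
    have hw1u : G.Adj u w₁ := adj_of_disjoint ((hdisj x y hxs hys hxy).1.symm)
    have hw1r : G.Adj w₁ r := adj_of_disjoint (hdisj x y hxs hys hxy).2
    have hw2u : G.Adj u w₂ := adj_of_disjoint ((hdisj x z hxs hzs hxz).1.symm)
    have hw2r : G.Adj w₂ r := adj_of_disjoint (hdisj x z hxs hzs hxz).2
    have hw1c : C w₁ = 0 := by
      by_contra h
      exact hns (rule3 hw1u hw1r hur.symm hu2 (by omega))
    have hw2c : C w₂ = 0 := by
      by_contra h
      exact hns (rule3 hw2u hw2r hur.symm hu2 (by omega))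
    have hww : w₁ ≠ w₂ := by
      intro h
      rw [hw1, hw2, Subtype.mk.injEq] at h
      have : y ∈ ({x, z} : Finset (Fin m)) := by rw [← h]; simp
      rw [Finset.mem_insert, Finset.mem_singleton] at this
      rcases this with h' | h'
      · exact hxy h'.symm
      · exact hyz h'
    have hw1A : w₁ ∈ A := by simp [hA, hw1r]
    have hw2A : w₂ ∈ A := by simp [hA, hw2r]
    have hAsum2 : (∑ v ∈ A, C v) + 2 ≤ A.card := by
      have h2 : w₂ ∈ A.erase w₁ := Finset.mem_erase.2 ⟨hww.symm, hw2A⟩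
      have e1 : (∑ v ∈ A.erase w₁, C v) + C w₁ = ∑ v ∈ A, C v :=
        Finset.sum_erase_add _ _ hw1A
      have e2 : (∑ v ∈ (A.erase w₁).erase w₂, C v) + C w₂ = ∑ v ∈ A.erase w₁, C v :=
        Finset.sum_erase_add _ _ h2
      have h3 : (∑ v ∈ (A.erase w₁).erase w₂, C v) ≤ ((A.erase w₁).erase w₂).card • 1 :=
        Finset.sum_le_card_nsmul _ _ _ (fun v hv => by
          rw [Finset.mem_erase, Finset.mem_erase] at hv
          exact hA1 v (by simp [hA] at hv; exact hv.2.2))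
      have h4 := Finset.card_erase_of_mem h2
      have h5 := Finset.card_erase_of_mem hw1A
      have h6 : 1 ≤ A.card := Finset.card_pos.2 ⟨w₁, hw1A⟩
      have h7 : 1 ≤ (A.erase w₁).card := Finset.card_pos.2 ⟨w₂, h2⟩
      simp only [smul_eq_mul, mul_one] at h3
      omega
    rw [hcardV] at hcards
    omega

end Upper6

section Petersen
open Finset

abbrev q01 : KV 5 := ⟨{0,1}, by decide⟩
abbrev q02 : KV 5 := ⟨{0,2}, by decide⟩
abbrev q03 : KV 5 := ⟨{0,3}, by decide⟩
abbrev q04 : KV 5 := ⟨{0,4}, by decide⟩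
abbrev q12 : KV 5 := ⟨{1,2}, by decide⟩
abbrev q13 : KV 5 := ⟨{1,3}, by decide⟩
abbrev q14 : KV 5 := ⟨{1,4}, by decide⟩
abbrev q23 : KV 5 := ⟨{2,3}, by decide⟩
abbrev q24 : KV 5 := ⟨{2,4}, by decide⟩
abbrev q34 : KV 5 := ⟨{3,4}, by decide⟩

lemma petersen_core (C : KV 5 → ℕ) (hsum : (∑ v, C v) = 10) (h02 : 2 ≤ C q02)
    (hns : ¬ Solvable (kneserGraph 5 2) C (stack q01 1)) : False := by
  have adj : ∀ u v : KV 5, Disjoint u.1 v.1 → (kneserGraph 5 2).Adj u v :=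
    fun _ _ h => adj_of_disjoint h
  -- pebble on target
  have h01 : C q01 = 0 := by
    by_contra h
    exact hns (solvable_of_one (by omega))
  -- neighbours of the target carry at most one pebble
  have h23 : C q23 ≤ 1 := by
    by_contra h
    exact hns (rule1 (adj q23 q01 (by decide)) (by omega))
  have h24 : C q24 ≤ 1 := by
    by_contra h
    exact hns (rule1 (adj q24 q01 (by decide)) (by omega))
  have h34 : C q34 = 0 := by
    by_contra h
    exact hns (rule3 (adj q02 q34 (by decide)) (adj q34 q01 (by decide)) (by decide) h02
      (by omega))
  -- caps of 3 on distance-two vertices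
  have c02 : C q02 ≤ 3 := by
    by_contra h
    exact hns (rule2 (adj q02 q34 (by decide)) (adj q34 q01 (by decide)) (by decide) (by omega))
  have c03 : C q03 ≤ 3 := by
    by_contra h
    exact hns (rule2 (adj q03 q24 (by decide)) (adj q24 q01 (by decide)) (by decide) (by omega))
  have c04 : C q04 ≤ 3 := by
    by_contra h
    exact hns (rule2 (adj q04 q23 (by decide)) (adj q23 q01 (by decide)) (by decide) (by omega))
  -- the mate of q02 carries at most one pebble
  have h12 : C q12 ≤ 1 := by
    by_contra h
    exact hns (rule4 (adj q02 q34 (by decide)) (adj q12 q34 (by decide))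
      (adj q34 q01 (by decide)) (by decide) (by decide) (by decide) h02 (by omega))
  -- caps of 2 on the B-neighbours of q02
  have h13 : C q13 ≤ 2 := by
    by_contra h
    exact hns (rule7 (adj q02 q13 (by decide)) (adj q13 q24 (by decide))
      (adj q24 q01 (by decide)) (by decide) (by decide) (by decide) h02 (by omega))
  have h14 : C q14 ≤ 2 := by
    by_contra h
    exact hns (rule7 (adj q02 q14 (by decide)) (adj q14 q23 (by decide))
      (adj q23 q01 (by decide)) (by decide) (by decide) (by decide) h02 (by omega))
  -- chain constraints
  have i1 : 1 ≤ C q13 → C q24 = 0 := by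
    intro h; by_contra h'
    exact hns (rule5 (adj q02 q13 (by decide)) (adj q13 q24 (by decide))
      (adj q24 q01 (by decide)) (by decide) (by decide) (by decide) h02 h (by omega))
  have i2 : 1 ≤ C q14 → C q23 = 0 := by
    intro h; by_contra h'
    exact hns (rule5 (adj q02 q14 (by decide)) (adj q14 q23 (by decide))
      (adj q23 q01 (by decide)) (by decide) (by decide) (by decide) h02 h (by omega))
  have i3 : 1 ≤ C q13 → C q03 ≤ 1 := by
    intro h; by_contra h'
    exact hns (rule8 (adj q02 q13 (by decide)) (adj q13 q24 (by decide))
      (adj q03 q24 (by decide)) (adj q24 q01 (by decide)) (by decide) (by decide) (by decide)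
      (by decide) (by decide) (by decide) h02 h (by omega))
  have i4 : 1 ≤ C q14 → C q04 ≤ 1 := by
    intro h; by_contra h'
    exact hns (rule8 (adj q02 q14 (by decide)) (adj q14 q23 (by decide))
      (adj q04 q23 (by decide)) (adj q23 q01 (by decide)) (by decide) (by decide) (by decide)
      (by decide) (by decide) (by decide) h02 h (by omega))
  have i5 : 2 ≤ C q13 → C q02 ≤ 2 := by
    intro h; by_contra h'
    exact hns (rule7 (adj q13 q02 (by decide)) (adj q02 q34 (by decide))
      (adj q34 q01 (by decide)) (by decide) (by decide) (by decide) h (by omega))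
  have i6 : 2 ≤ C q14 → C q02 ≤ 2 := by
    intro h; by_contra h'
    exact hns (rule7 (adj q14 q02 (by decide)) (adj q02 q34 (by decide))
      (adj q34 q01 (by decide)) (by decide) (by decide) (by decide) h (by omega))
  have i7 : 2 ≤ C q13 → C q04 ≤ 2 := by
    intro h; by_contra h'
    exact hns (rule7 (adj q13 q04 (by decide)) (adj q04 q23 (by decide))
      (adj q23 q01 (by decide)) (by decide) (by decide) (by decide) h (by omega))
  have i8 : 2 ≤ C q14 → C q03 ≤ 2 := by
    intro h; by_contra h'
    exact hns (rule7 (adj q14 q03 (by decide)) (adj q03 q24 (by decide))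
      (adj q24 q01 (by decide)) (by decide) (by decide) (by decide) h (by omega))
  have i9 : 2 ≤ C q03 → C q24 = 0 := by
    intro h; by_contra h'
    exact hns (rule3 (adj q03 q24 (by decide)) (adj q24 q01 (by decide)) (by decide) h
      (by omega))
  have i10 : 2 ≤ C q04 → C q23 = 0 := by
    intro h; by_contra h'
    exact hns (rule3 (adj q04 q23 (by decide)) (adj q23 q01 (by decide)) (by decide) h
      (by omega))
  have i11 : 1 ≤ C q12 → C q03 ≤ 1 := by
    intro h; by_contra h'
    exact hns (rule8 (adj q03 q12 (by decide)) (adj q12 q34 (by decide))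
      (adj q02 q34 (by decide)) (adj q34 q01 (by decide)) (by decide) (by decide) (by decide)
      (by decide) (by decide) (by decide) (by omega) h h02)
  have i12 : 1 ≤ C q12 → C q04 ≤ 1 := by
    intro h; by_contra h'
    exact hns (rule8 (adj q04 q12 (by decide)) (adj q12 q34 (by decide))
      (adj q02 q34 (by decide)) (adj q34 q01 (by decide)) (by decide) (by decide) (by decide)
      (by decide) (by decide) (by decide) (by omega) h h02)
  -- sum decomposition
  have huniv : ({q01, q02, q03, q04, q12, q13, q14, q23, q24, q34} : Finset (KV 5)) =
      Finset.univ := Finset.eq_univ_iff_forall.2 (by decide)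
  rw [← huniv] at hsum
  rw [Finset.sum_insert (by decide), Finset.sum_insert (by decide),
    Finset.sum_insert (by decide), Finset.sum_insert (by decide),
    Finset.sum_insert (by decide), Finset.sum_insert (by decide),
    Finset.sum_insert (by decide), Finset.sum_insert (by decide),
    Finset.sum_insert (by decide), Finset.sum_singleton] at hsum
  omega

end Petersen

section PetersenMain
open Finset

lemma petersen_p01 (C : KV 5 → ℕ) (hsum : (∑ v, C v) = 10) :
    Solvable (kneserGraph 5 2) C (stack q01 1) := by
  classical
  by_contra hns
  have h01 : C q01 = 0 := by
    by_contra h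
    exact hns (solvable_of_one (by omega))
  -- some vertex has two pebbles
  obtain ⟨u, hu2⟩ : ∃ u : KV 5, 2 ≤ C u := by
    by_contra h
    push_neg at h
    have h1 : (∑ v ∈ (Finset.univ : Finset (KV 5)).erase q01, C v) ≤
        ((Finset.univ : Finset (KV 5)).erase q01).card • 1 :=
      Finset.sum_le_card_nsmul _ _ _ (fun v _ => by have := h v; omega)
    have h2 : (∑ v ∈ (Finset.univ : Finset (KV 5)).erase q01, C v) + C q01 = ∑ v, C v :=
      Finset.sum_erase_add _ _ (Finset.mem_univ q01)
    have h3 : ((Finset.univ : Finset (KV 5)).erase q01).card = 9 := by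
      rw [Finset.card_erase_of_mem (Finset.mem_univ q01), Finset.card_univ, card_KV]
      rfl
    simp only [smul_eq_mul, mul_one] at h1
    omega
  -- transport to the standard heavy vertex q02 by a relabelling fixing {0,1}
  have transport : ∀ σ : Fin 5 ≃ Fin 5, vmap σ q02 = u → vmap σ q01 = q01 → False := by
    intro σ hσu hσr
    have hsum' : (∑ v, (C ∘ vmap σ) v) = 10 := by
      rw [← hsum]
      exact Equiv.sum_comp (vmap σ) C
    have h2' : 2 ≤ (C ∘ vmap σ) q02 := by
      simp only [Function.comp_apply, hσu]
      exact hu2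
    refine petersen_core (C ∘ vmap σ) hsum' h2' (fun hs => hns ?_)
    have := solvable_of_vmap hs
    rwa [hσr] at this
  -- case on which vertex is heavy
  have hucases : ∀ w : KV 5, w = q01 ∨ w = q02 ∨ w = q03 ∨ w = q04 ∨ w = q12 ∨ w = q13 ∨
      w = q14 ∨ w = q23 ∨ w = q24 ∨ w = q34 := by decide
  rcases hucases u with rfl | rfl | rfl | rfl | rfl | rfl | rfl | rfl | rfl | rfl
  · omega
  · exact transport (Equiv.refl _) (by decide) (by decide)
  · exact transport (Equiv.swap 2 3) (by decide) (by decide)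
  · exact transport (Equiv.swap 2 4) (by decide) (by decide)
  · exact transport ((Equiv.swap 0 1)) (by decide) (by decide)
  · exact transport ((Equiv.swap 0 1).trans (Equiv.swap 2 3)) (by decide) (by decide)
  · exact transport ((Equiv.swap 0 1).trans (Equiv.swap 2 4)) (by decide) (by decide)
  · exact hns (rule1 (adj_of_disjoint (by decide : Disjoint q23.1 q01.1)) hu2)
  · exact hns (rule1 (adj_of_disjoint (by decide : Disjoint q24.1 q01.1)) hu2)
  · exact hns (rule1 (adj_of_disjoint (by decide : Disjoint q34.1 q01.1)) hu2)

lemma petersen_main (r : KV 5) (C : KV 5 → ℕ) (hsum : (∑ v, C v) = 10) :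
    Solvable (kneserGraph 5 2) C (stack r 1) := by
  obtain ⟨a, b, hab, hr⟩ := Finset.card_eq_two.1 r.2
  set τ : Fin 5 ≃ Fin 5 := Equiv.swap 0 a with hτ
  set σ : Fin 5 ≃ Fin 5 := (Equiv.swap 1 (τ b)).trans τ with hσ
  have hτb : τ b ≠ 0 := by
    intro h
    have : b = τ 0 := by
      rw [← h]
      simp [hτ]
    rw [hτ, Equiv.swap_apply_left] at this
    exact hab this.symm
  have hσ0 : σ 0 = a := by
    rw [hσ]
    simp only [Equiv.trans_apply]
    rw [Equiv.swap_apply_of_ne_of_ne (by decide) (Ne.symm hτb), hτ, Equiv.swap_apply_left]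
  have hσ1 : σ 1 = b := by
    rw [hσ]
    simp only [Equiv.trans_apply]
    rw [Equiv.swap_apply_left, hτ, Equiv.swap_apply_self]
  have hvr : vmap σ q01 = r := by
    apply Subtype.ext
    show ({0, 1} : Finset (Fin 5)).map σ.toEmbedding = r.1
    rw [hr]
    rw [Finset.map_insert, Finset.map_singleton]
    simp [hσ0, hσ1]
  have hsum' : (∑ v, (C ∘ vmap σ) v) = 10 := by
    rw [← hsum]
    exact Equiv.sum_comp (vmap σ) C
  have := solvable_of_vmap (petersen_p01 (C ∘ vmap σ) hsum')
  rwa [hvr] at this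

end PetersenMain

section Final
open Finset

lemma upper_main {m : ℕ} (hm : 5 ≤ m) (r : KV m) (C : KV m → ℕ)
    (hsum : (∑ v, C v) = m.choose 2) : Solvable (kneserGraph m 2) C (stack r 1) := by
  rcases eq_or_lt_of_le hm with h | h
  · subst h
    exact petersen_main r C (by rw [hsum]; rfl)
  · exact upper6 (by omega) r C hsum

lemma exists_unsolvable {m : ℕ} (r : KV m) (k : ℕ) (hk : k ≤ m.choose 2 - 1) :
    ∃ C : KV m → ℕ, (∑ v, C v) = k ∧ ¬ Solvable (kneserGraph m 2) C (stack r 1) := by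
  classical
  have hcard : ((Finset.univ : Finset (KV m)).erase r).card = m.choose 2 - 1 := by
    rw [Finset.card_erase_of_mem (Finset.mem_univ r), Finset.card_univ, card_KV]
  obtain ⟨T, hT, hTc⟩ := Finset.exists_subset_card_eq
    (show k ≤ ((Finset.univ : Finset (KV m)).erase r).card by omega)
  refine ⟨fun v => if v ∈ T then 1 else 0, ?_, ?_⟩
  · rw [Finset.sum_ite_mem, Finset.univ_inter, Finset.sum_const, hTc, smul_eq_mul, mul_one]
  · apply unsolvable_of_le_one
    · intro v
      split <;> omega
    · have : r ∉ T := fun h => (Finset.mem_erase.1 (hT h)).1 rfl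
      simp [this]

end Final

theorem kneser_pebbling_number (m : ℕ) (hm : 5 ≤ m) :
    tPebblingNumber (kneserGraph m 2) 1 = m.choose 2 ∧
    (∀ (r : {s : Finset (Fin m) // s.card = 2}) (C : {s : Finset (Fin m) // s.card = 2} → ℕ),
      (∑ v, C v) = m.choose 2 → Solvable (kneserGraph m 2) C (stack r 1)) ∧
    (∃ (r : {s : Finset (Fin m) // s.card = 2}) (C : {s : Finset (Fin m) // s.card = 2} → ℕ),
      (∑ v, C v) = m.choose 2 - 1 ∧ ¬ Solvable (kneserGraph m 2) C (stack r 1)) := by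
  have hn0 : 0 < m.choose 2 := Nat.choose_pos (by omega)
  have hne : Nonempty (KV m) := by
    rw [← Fintype.card_pos_iff, card_KV]
    exact hn0
  obtain ⟨r0⟩ := hne
  refine ⟨?_, fun r C h => upper_main hm r C h, ?_⟩
  · have hpn : ∀ r : KV m, pebblingNumber (kneserGraph m 2) (stack r 1) = m.choose 2 := by
      intro r
      have hmem : m.choose 2 ∈ {k | ∀ C : KV m → ℕ,
          (∑ v, C v) = k → Solvable (kneserGraph m 2) C (stack r 1)} :=
        fun C h => upper_main hm r C h
      apply le_antisymm
      · exact Nat.sInf_le hmem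
      · apply le_csInf ⟨_, hmem⟩
        intro k hk
        by_contra h
        push_neg at h
        obtain ⟨C, hC, hCn⟩ := exists_unsolvable r k (by omega)
        exact hCn (hk C hC)
    unfold tPebblingNumber
    rw [show (fun r : KV m => pebblingNumber (kneserGraph m 2) (stack r 1)) =
      fun _ => m.choose 2 from funext hpn]
    exact Finset.sup_const ⟨r0, Finset.mem_univ r0⟩ _
  · obtain ⟨C, hC, hCn⟩ := exists_unsolvable r0 (m.choose 2 - 1) le_rfl
    exact ⟨r0, C, hC, hCn⟩
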